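/- arXiv:1908.03724 — 2 statements merged into one kernel-verified Lean document; each statement's English description precedes it below -/
import Mathlib

section
/- Let d ≥ 2 be an integer, δ ≥ 1, and let B = (b_1, …, b_{d+1}) ∈ ℝ^{m×(d+1)} be a δ-twin-reduced basis. Then δ^{−d/(d−1)} · ‖b_1‖ ≤ vol(L(B))^{1/(d+1)} ≤ δ^{d/(d−1)} · ‖b*_{d+1}‖. -/
noncomputable section

/-- Euclidean space `ℝ^m`. -/
abbrev Euc (m : ℕ) : Type := EuclideanSpace ℝ (Fin m)

variable {m : ℕ}

/-- `projGS B s` is the orthogonal projection `π_{s+1}` onto the subspace orthogonal to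
`b_1, …, b_s` (0-based: orthogonal to `B 0, …, B (s-1)`). -/
def projGS (B : ℕ → Euc m) (s : ℕ) (x : Euc m) : Euc m :=
  (Submodule.orthogonalProjectionOnto ((Submodule.span ℝ (B '' Set.Iio s))ᗮ) x : Euc m)

/-- The Gram–Schmidt vector `b*_{i+1}` (0-based index `i`). -/
def gsoVec (B : ℕ → Euc m) (i : ℕ) : Euc m := projGS B i (B i)

/-- The projected block `B_{[s+1, s+ℓ]}` (0-based start `s`; the length is supplied
separately to the predicates below). -/
def block (B : ℕ → Euc m) (s : ℕ) : ℕ → Euc m := fun t => projGS B s (B (s + t))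

/-- Gram matrix of the first `ℓ` vectors. -/
def gram (B : ℕ → Euc m) (ℓ : ℕ) : Matrix (Fin ℓ) (Fin ℓ) ℝ :=
  Matrix.of fun i j => (inner ℝ (B i) (B j) : ℝ)

/-- `vol(L(B)) = det(BᵀB)^{1/2}` for the first `ℓ` vectors. -/
def volB (B : ℕ → Euc m) (ℓ : ℕ) : ℝ := Real.sqrt (gram B ℓ).det

/-- The lattice generated by the first `ℓ` vectors. -/
def latticeSpan (B : ℕ → Euc m) (ℓ : ℕ) : Submodule ℤ (Euc m) :=
  Submodule.span ℤ (B '' Set.Iio ℓ)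

/-- `λ₁(L)`: the minimum norm of a nonzero lattice vector. -/
def lambda1 (L : Submodule ℤ (Euc m)) : ℝ :=
  sInf {r : ℝ | ∃ x ∈ L, x ≠ 0 ∧ ‖x‖ = r}

/-- `B` (of rank `ℓ`) is `δ`-SVP-reduced. -/
def SVPReduced (δ : ℝ) (B : ℕ → Euc m) (ℓ : ℕ) : Prop :=
  ‖B 0‖ ≤ δ * lambda1 (latticeSpan B ℓ)

/-- `B` (of rank `ℓ`) is `δ`-HSVP-reduced. -/
def HSVPReduced (δ : ℝ) (B : ℕ → Euc m) (ℓ : ℕ) : Prop :=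
  ‖B 0‖ ≤ δ * volB B ℓ ^ ((1 : ℝ) / ℓ)

/-- The dual basis `B^× = B (BᵀB)⁻¹` of the first `ℓ` vectors (extended by `0`). -/
def dualFam (B : ℕ → Euc m) (ℓ : ℕ) : ℕ → Euc m := fun i =>
  if h : i < ℓ then ∑ j : Fin ℓ, ((gram B ℓ)⁻¹ j ⟨i, h⟩) • B j else 0

/-- The reversed dual basis `B^{-s}`. -/
def revDual (B : ℕ → Euc m) (ℓ : ℕ) : ℕ → Euc m := fun i => dualFam B ℓ (ℓ - 1 - i)

/-- `B` (of rank `ℓ`) is `δ`-DHSVP-reduced: its reversed dual basis is `δ`-HSVP-reduced. -/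
def DHSVPReduced (δ : ℝ) (B : ℕ → Euc m) (ℓ : ℕ) : Prop :=
  HSVPReduced δ (revDual B ℓ) ℓ

/-- `B = (b_1, …, b_{d+1})` is `δ`-twin-reduced: `B_{[1,d]}` is `δ`-HSVP-reduced and
`B_{[2,d+1]}` is `δ`-DHSVP-reduced. -/
def TwinReduced (δ : ℝ) (B : ℕ → Euc m) (d : ℕ) : Prop :=
  HSVPReduced δ (block B 0) d ∧ DHSVPReduced δ (block B 1) d

/-- Gram–Schmidt coefficient `μ_{i,j}` (0-based). -/
def mu (B : ℕ → Euc m) (i j : ℕ) : ℝ :=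
  (inner ℝ (B i) (gsoVec B j) : ℝ) / ‖gsoVec B j‖ ^ 2

/-- The first `ℓ` vectors are size-reduced. -/
def SizeReduced (B : ℕ → Euc m) (ℓ : ℕ) : Prop :=
  ∀ i j, j < i → i < ℓ → |mu B i j| ≤ 1 / 2

/-- The first `ℓ` vectors are `ε`-LLL-reduced. -/
def LLLReduced (ε : ℝ) (B : ℕ → Euc m) (ℓ : ℕ) : Prop :=
  SizeReduced B ℓ ∧
    ∀ i, 0 < i → i < ℓ →
      ‖gsoVec B (i - 1)‖ ^ 2 ≤ (1 + ε) * ‖mu B i (i - 1) • gsoVec B (i - 1) + gsoVec B i‖ ^ 2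

/-- `B` (of rank `ℓ`) is `δ`-DSVP-reduced: its reversed dual basis is `δ`-SVP-reduced
and `B` is `(1/3)`-LLL-reduced. -/
def DSVPReduced (δ : ℝ) (B : ℕ → Euc m) (ℓ : ℕ) : Prop :=
  SVPReduced δ (revDual B ℓ) ℓ ∧ LLLReduced (1 / 3) B ℓ

/-- `γ` is an admissible Hermite bound for rank `r`: every lattice generated by `r`
linearly independent vectors of a Euclidean space satisfies `λ₁² ≤ γ · vol^{2/r}`. -/
def IsHermiteBound (γ : ℝ) (r : ℕ) : Prop :=
  ∀ (m' : ℕ) (v : ℕ → Euc m'), LinearIndependent ℝ (fun i : Fin r => v i) →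
    lambda1 (latticeSpan v r) ^ 2 ≤ γ * volB v r ^ ((2 : ℝ) / r)


/-! ### Auxiliary lemmas -/

open Matrix

open Submodule in
lemma projGS_eq (B : ℕ → Euc m) (s : ℕ) (x v : Euc m)
    (hv : v ∈ (span ℝ (B '' Set.Iio s))ᗮ)
    (hxv : x - v ∈ span ℝ (B '' Set.Iio s)) : projGS B s x = v := by
  unfold projGS
  rw [← Submodule.starProjection_apply, Submodule.eq_starProjection_of_mem_orthogonal hv]
  · rwa [Submodule.orthogonal_orthogonal]

open Submodule in
lemma projGS_mem_orthogonal (B : ℕ → Euc m) (s : ℕ) (x : Euc m) :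
    projGS B s x ∈ (span ℝ (B '' Set.Iio s))ᗮ := SetLike.coe_mem _

open Submodule in
lemma sub_projGS_mem (B : ℕ → Euc m) (s : ℕ) (x : Euc m) :
    x - projGS B s x ∈ span ℝ (B '' Set.Iio s) := by
  unfold projGS
  rw [← Submodule.starProjection_apply, Submodule.starProjection_orthogonal_val]
  simp

open Submodule in
lemma gsoVec_mem_orthogonal (B : ℕ → Euc m) (i : ℕ) :
    gsoVec B i ∈ (span ℝ (B '' Set.Iio i))ᗮ := SetLike.coe_mem _

open Submodule in
lemma sub_gsoVec_mem (B : ℕ → Euc m) (i : ℕ) :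
    B i - gsoVec B i ∈ span ℝ (B '' Set.Iio i) := sub_projGS_mem B i (B i)

open Submodule InnerProductSpace in
lemma gsoVec_eq_gramSchmidt (B : ℕ → Euc m) (i : ℕ) :
    gsoVec B i = gramSchmidt ℝ B i := by
  apply projGS_eq
  · rw [Submodule.mem_orthogonal]
    intro u hu
    induction hu using Submodule.span_induction with
    | mem u hu =>
        obtain ⟨j, hj, rfl⟩ := hu
        rw [real_inner_comm]
        exact gramSchmidt_inv_triangular ℝ B hj
    | zero => simp
    | add u v _ _ h1 h2 => rw [inner_add_left, h1, h2, add_zero]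
    | smul c u _ h => rw [inner_smul_left, h, mul_zero]
  · have h := gramSchmidt_def' ℝ B i
    have heq : B i - gramSchmidt ℝ B i = ∑ j ∈ Finset.Iio i,
        (ℝ ∙ gramSchmidt ℝ B j).starProjection (B i) :=
      sub_eq_iff_eq_add'.2 h
    rw [heq]
    apply Submodule.sum_mem
    intro j hj
    have hmem : (ℝ ∙ gramSchmidt ℝ B j).starProjection (B i)
        ∈ (ℝ ∙ gramSchmidt ℝ B j) := Submodule.starProjection_apply_mem _ _
    have hle : (ℝ ∙ gramSchmidt ℝ B j) ≤ span ℝ (B '' Set.Iio i) := by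
      rw [← span_gramSchmidt_Iio ℝ B i]
      apply Submodule.span_le.2
      rintro x hx
      rcases Set.mem_singleton_iff.1 hx with rfl
      exact Submodule.subset_span (Set.mem_image_of_mem _ (Finset.mem_Iio.1 hj))
    exact hle hmem

/-- coefficient matrix entries (ℕ-indexed) -/
def cm (B : ℕ → Euc m) (j a : ℕ) : ℝ :=
  if j = a then 1 else if j < a then mu B a j else 0

open Submodule in
lemma inner_B_gsoVec (B : ℕ → Euc m) (a j : ℕ) :
    (inner ℝ (B a) (gsoVec B j) : ℝ) = cm B j a * ‖gsoVec B j‖ ^ 2 := by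
  unfold cm
  rcases lt_trichotomy j a with h | rfl | h
  · rw [if_neg h.ne, if_pos h]
    unfold mu
    rcases eq_or_ne (gsoVec B j) 0 with hz | hz
    · simp [hz]
    · rw [div_mul_cancel₀]
      exact pow_ne_zero _ (norm_ne_zero_iff.2 hz)
  · rw [if_pos rfl, one_mul]
    have hp := sub_gsoVec_mem B j
    have ho := gsoVec_mem_orthogonal B j
    have h0 : (inner ℝ (B j - gsoVec B j) (gsoVec B j) : ℝ) = 0 :=
      (Submodule.mem_orthogonal _ _).1 ho _ hp
    rw [inner_sub_left] at h0
    rw [sub_eq_zero] at h0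
    rw [h0, real_inner_self_eq_norm_sq]
  · rw [if_neg h.ne', if_neg (by omega)]
    have ho := gsoVec_mem_orthogonal B j
    have hmem : B a ∈ span ℝ (B '' Set.Iio j) :=
      Submodule.subset_span (Set.mem_image_of_mem _ h)
    rw [(Submodule.mem_orthogonal _ _).1 ho _ hmem, zero_mul]

open InnerProductSpace in
lemma B_expansion (B : ℕ → Euc m) (b : ℕ) :
    B b = gsoVec B b + ∑ i ∈ Finset.range b, mu B b i • gsoVec B i := by
  have h := gramSchmidt_def'' ℝ B b
  rw [← gsoVec_eq_gramSchmidt] at h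
  rw [h]
  congr 1
  rw [Nat.Iio_eq_range]
  apply Finset.sum_congr rfl
  intro i _
  rw [← gsoVec_eq_gramSchmidt]
  unfold mu
  rw [real_inner_comm]
  norm_num

lemma gram_eq_mul (B : ℕ → Euc m) (ℓ : ℕ) :
    gram B ℓ = (Matrix.of fun (j a : Fin ℓ) => cm B j a)ᵀ *
      (Matrix.diagonal (fun j : Fin ℓ => ‖gsoVec B j‖ ^ 2) *
        Matrix.of fun (j a : Fin ℓ) => cm B j a) := by
  ext a b
  rw [Matrix.mul_apply]
  have hentry : ∀ j : Fin ℓ,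
      (Matrix.of fun (j a : Fin ℓ) => cm B j a)ᵀ a j *
        ((Matrix.diagonal (fun j : Fin ℓ => ‖gsoVec B j‖ ^ 2) *
          Matrix.of fun (j a : Fin ℓ) => cm B j a) j b)
      = (inner ℝ (B a) (gsoVec B j) : ℝ) * cm B j b := by
    intro j
    rw [Matrix.diagonal_mul, Matrix.transpose_apply, inner_B_gsoVec]
    simp [Matrix.of_apply]
    ring
  rw [Finset.sum_congr rfl fun j _ => hentry j]
  show (inner ℝ (B a) (B b) : ℝ) = _
  rw [Fin.sum_univ_eq_sum_range (fun j => (inner ℝ (B a) (gsoVec B j) : ℝ) * cm B j b)]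
  rw [← Finset.sum_subset (Finset.range_subset_range.2 (Nat.succ_le_of_lt b.isLt))
    (by
      intro j _ hj
      rw [Finset.mem_range, Nat.lt_succ_iff, not_le] at hj
      have hz : cm B j b = 0 := by
        unfold cm
        rw [if_neg (by omega), if_neg (by omega)]
      rw [hz, mul_zero])]
  rw [Finset.sum_range_succ]
  conv_lhs => rw [B_expansion B b]
  rw [inner_add_right, inner_sum]
  have hone : cm B (b : ℕ) (b : ℕ) = 1 := by unfold cm; rw [if_pos rfl]
  rw [hone, mul_one]
  rw [add_comm]
  congr 1
  apply Finset.sum_congr rfl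
  intro i hi
  rw [real_inner_smul_right]
  have hmu : cm B i b = mu B b i := by
    unfold cm
    rw [if_neg (by rw [Finset.mem_range] at hi; omega), if_pos (Finset.mem_range.1 hi)]
  rw [hmu]
  ring

lemma gram_det (B : ℕ → Euc m) (ℓ : ℕ) :
    (gram B ℓ).det = ∏ i : Fin ℓ, ‖gsoVec B i‖ ^ 2 := by
  rw [gram_eq_mul, Matrix.det_mul, Matrix.det_mul, Matrix.det_transpose]
  have hc : (Matrix.of fun (j a : Fin ℓ) => cm B j a).det = 1 := by
    rw [Matrix.det_of_upperTriangular]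
    · apply Finset.prod_eq_one
      intro i _
      show cm B i i = 1
      unfold cm; rw [if_pos rfl]
    · intro i j hij
      show cm B i j = 0
      have hji : (j : ℕ) < (i : ℕ) := hij
      unfold cm
      rw [if_neg (by omega), if_neg (by omega)]
  rw [hc, Matrix.det_diagonal, one_mul, mul_one]

lemma volB_eq_prod (B : ℕ → Euc m) (ℓ : ℕ) :
    volB B ℓ = ∏ i : Fin ℓ, ‖gsoVec B i‖ := by
  unfold volB
  rw [gram_det, Finset.prod_pow]
  exact Real.sqrt_sq (Finset.prod_nonneg fun i _ => norm_nonneg _)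

lemma block_zero (B : ℕ → Euc m) : block B 0 = B := by
  funext t
  show projGS B 0 (B (0 + t)) = B t
  rw [zero_add]
  have himg : B '' Set.Iio (0:ℕ) = ∅ := by
    have h0 : Set.Iio (0:ℕ) = ∅ := by ext x; simp
    rw [h0, Set.image_empty]
  apply projGS_eq
  · rw [himg, Submodule.span_empty, Submodule.bot_orthogonal_eq_top]
    exact Submodule.mem_top
  · rw [himg, Submodule.span_empty]
    simp

open Submodule in
lemma gsoVec_block (B : ℕ → Euc m) (s i : ℕ) :
    gsoVec (block B s) i = gsoVec B (s + i) := by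
  set C := block B s with hC
  set U := span ℝ (B '' Set.Iio s) with hU
  set T := span ℝ (C '' Set.Iio i) with hT
  set S := span ℝ (B '' Set.Iio (s + i)) with hS
  have f1 : ∀ t, C t ∈ Uᗮ := fun t => projGS_mem_orthogonal B s _
  have f2 : ∀ t, B (s + t) - C t ∈ U := fun t => sub_projGS_mem B s _
  have f3 : T ≤ Uᗮ := by
    rw [hT]
    apply Submodule.span_le.2
    rintro _ ⟨t, _, rfl⟩
    exact f1 t
  have hUS : U ≤ S := span_mono (Set.image_mono (Set.Iio_subset_Iio (Nat.le_add_right s i)))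
  have hTS : T ≤ S := by
    rw [hT]
    apply span_le.2
    rintro _ ⟨t, ht, rfl⟩
    have h1 : B (s + t) ∈ S := subset_span (Set.mem_image_of_mem _ (by
      simp only [Set.mem_Iio] at ht ⊢; omega))
    have h2 : B (s + t) - C t ∈ S := hUS (f2 t)
    have := Submodule.sub_mem S h1 h2
    simpa using this
  have hSUT : S ≤ U ⊔ T := by
    rw [hS]
    apply span_le.2
    rintro _ ⟨k, hk, rfl⟩
    simp only [Set.mem_Iio] at hk
    rcases lt_or_ge k s with h | h
    · exact Submodule.mem_sup_left (subset_span (Set.mem_image_of_mem _ h))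
    · obtain ⟨t, rfl⟩ : ∃ t, k = s + t := ⟨k - s, by omega⟩
      have h1 : C t ∈ T := subset_span (Set.mem_image_of_mem _ (by
        simp only [Set.mem_Iio]; omega))
      have h2 : B (s + t) - C t ∈ U := f2 t
      have := Submodule.add_mem (U ⊔ T) (Submodule.mem_sup_left h2) (Submodule.mem_sup_right h1)
      simpa using this
  have hv : gsoVec B (s + i) ∈ Tᗮ :=
    Submodule.orthogonal_le hTS (projGS_mem_orthogonal B (s + i) _)
  apply projGS_eq
  · exact hv
  · have hq : B (s + i) - C i ∈ U := f2 i
    have hr : B (s + i) - gsoVec B (s + i) ∈ S := sub_projGS_mem B (s + i) _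
    obtain ⟨u, hu, t, ht, hut⟩ := Submodule.mem_sup.1 (hSUT hr)
    have key : u - (B (s + i) - C i) = 0 := by
      have hmemU : u - (B (s + i) - C i) ∈ U := Submodule.sub_mem U hu hq
      have hmemUo : u - (B (s + i) - C i) ∈ Uᗮ := by
        have h1 : B (s + i) - u ∈ Uᗮ := by
          have heq : B (s + i) - u = gsoVec B (s + i) + t := by
            rw [eq_sub_of_add_eq hut]; abel
          rw [heq]
          exact Submodule.add_mem _
            (Submodule.orthogonal_le hUS (projGS_mem_orthogonal B (s + i) _)) (f3 ht)
        have h2 : C i ∈ Uᗮ := f1 i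
        have := Submodule.sub_mem Uᗮ h2 h1
        have he : C i - (B (s + i) - u) = u - (B (s + i) - C i) := by abel
        rwa [he] at this
      have := (Submodule.mem_orthogonal _ _).1 hmemUo _ hmemU
      rwa [inner_self_eq_zero] at this
    have hfin : C i - gsoVec B (s + i) = t := by
      have h1 : u + t = B (s + i) - gsoVec B (s + i) := hut
      have h2 : u = B (s + i) - C i := by rwa [sub_eq_zero] at key
      rw [h2] at h1
      have h4 : t = B (s + i) - gsoVec B (s + i) - (B (s + i) - C i) := by
        rw [← h1]; abel
      rw [h4]; abel
    rw [hfin]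
    exact ht

section Dual
variable (C : ℕ → Euc m) (ℓ : ℕ)

lemma inner_dualFam (hdet : (gram C ℓ).det ≠ 0) (j i : Fin ℓ) :
    (inner ℝ (C j) (dualFam C ℓ i) : ℝ) = if j = i then 1 else 0 := by
  unfold dualFam
  rw [dif_pos i.isLt]
  rw [inner_sum]
  simp only [real_inner_smul_right]
  have hterm : ∀ k : Fin ℓ, (gram C ℓ)⁻¹ k ⟨(i : ℕ), i.isLt⟩ * (inner ℝ (C j) (C k) : ℝ)
      = gram C ℓ j k * (gram C ℓ)⁻¹ k i := by
    intro k
    rw [Fin.eta]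
    rw [mul_comm]
    rfl
  rw [Finset.sum_congr rfl fun k _ => hterm k]
  rw [← Matrix.mul_apply, Matrix.mul_nonsing_inv _ (isUnit_iff_ne_zero.2 hdet),
    Matrix.one_apply]

lemma inner_dualFam_dualFam (hdet : (gram C ℓ).det ≠ 0) (a b : Fin ℓ) :
    (inner ℝ (dualFam C ℓ a) (dualFam C ℓ b) : ℝ) = (gram C ℓ)⁻¹ b a := by
  conv_lhs => rw [show dualFam C ℓ (a : ℕ) = ∑ k : Fin ℓ, ((gram C ℓ)⁻¹ k a) • C k by
    unfold dualFam; rw [dif_pos a.isLt, Fin.eta]]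
  rw [sum_inner]
  simp only [real_inner_smul_left]
  rw [Finset.sum_congr rfl fun k _ => by rw [inner_dualFam C ℓ hdet k b]]
  simp [Finset.sum_ite_eq', Matrix.mul_apply]

lemma gram_revDual (hdet : (gram C ℓ).det ≠ 0) :
    gram (revDual C ℓ) ℓ = ((gram C ℓ)⁻¹ᵀ).submatrix Fin.revPerm Fin.revPerm := by
  ext i j
  show (inner ℝ (revDual C ℓ i) (revDual C ℓ j) : ℝ) = _
  unfold revDual
  have hrev : ∀ k : Fin ℓ, ℓ - 1 - (k : ℕ) = ((Fin.rev k : Fin ℓ) : ℕ) := by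
    intro k
    rw [Fin.val_rev]
    omega
  rw [hrev i, hrev j, inner_dualFam_dualFam C ℓ hdet]
  rfl

lemma det_gram_revDual (hdet : (gram C ℓ).det ≠ 0) :
    (gram (revDual C ℓ) ℓ).det = ((gram C ℓ).det)⁻¹ := by
  rw [gram_revDual C ℓ hdet]
  rw [Matrix.det_submatrix_equiv_self, Matrix.det_transpose, Matrix.det_nonsing_inv,
    Ring.inverse_eq_inv]

lemma volB_revDual (hdet : (gram C ℓ).det ≠ 0) :
    volB (revDual C ℓ) ℓ = (volB C ℓ)⁻¹ := by
  unfold volB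
  rw [det_gram_revDual C ℓ hdet, Real.sqrt_inv]

open Submodule in
lemma dualFam_last (hℓ : 1 ≤ ℓ) (hdet : (gram C ℓ).det ≠ 0)
    (hg : gsoVec C (ℓ - 1) ≠ 0) :
    dualFam C ℓ (ℓ - 1) = (‖gsoVec C (ℓ - 1)‖ ^ 2)⁻¹ • gsoVec C (ℓ - 1) := by
  set g := gsoVec C (ℓ - 1) with hgdef
  set S := span ℝ (C '' Set.Iio ℓ) with hS
  have hlt : ℓ - 1 < ℓ := by omega
  have hDmem : dualFam C ℓ (ℓ - 1) ∈ S := by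
    unfold dualFam
    rw [dif_pos hlt]
    exact Submodule.sum_mem _ fun k _ => Submodule.smul_mem _ _
      (subset_span (Set.mem_image_of_mem _ k.isLt))
  have hgmem : g ∈ S := by
    have h1 : C (ℓ - 1) - g ∈ span ℝ (C '' Set.Iio (ℓ - 1)) := sub_gsoVec_mem C (ℓ - 1)
    have h2 : span ℝ (C '' Set.Iio (ℓ - 1)) ≤ S :=
      span_mono (Set.image_mono (Set.Iio_subset_Iio (by omega)))
    have h3 : C (ℓ - 1) ∈ S := subset_span (Set.mem_image_of_mem _ hlt)
    have := Submodule.sub_mem S h3 (h2 h1)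
    simpa using this
  have hwmem : (‖g‖ ^ 2)⁻¹ • g ∈ S := Submodule.smul_mem _ _ hgmem
  have hinner : ∀ j : Fin ℓ, (inner ℝ (C j) (dualFam C ℓ (ℓ - 1) - (‖g‖ ^ 2)⁻¹ • g) : ℝ) = 0 := by
    intro j
    rw [inner_sub_right, real_inner_smul_right]
    have h1 : (inner ℝ (C j) (dualFam C ℓ (ℓ - 1)) : ℝ) = if (j : ℕ) = ℓ - 1 then 1 else 0 := by
      have := inner_dualFam C ℓ hdet j ⟨ℓ - 1, hlt⟩
      rw [this]
      congr 1
      simp [Fin.ext_iff]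
    have h2 : (inner ℝ (C j) g : ℝ) = (if (j : ℕ) = ℓ - 1 then 1 else 0) * ‖g‖ ^ 2 := by
      rw [hgdef, inner_B_gsoVec C j (ℓ - 1)]
      congr 1
      unfold cm
      have hnlt : ¬ (ℓ - 1 < (j : ℕ)) := by have := j.isLt; omega
      by_cases h : (j : ℕ) = ℓ - 1
      · rw [if_pos h.symm, if_pos h]
      · rw [if_neg (fun hh => h hh.symm), if_neg hnlt, if_neg h]
    rw [h1, h2]
    have hg2 : ‖g‖ ^ 2 ≠ 0 := pow_ne_zero _ (norm_ne_zero_iff.2 hg)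
    field_simp
    simp
  have hdiff : dualFam C ℓ (ℓ - 1) - (‖g‖ ^ 2)⁻¹ • g ∈ Sᗮ := by
    rw [Submodule.mem_orthogonal]
    intro u hu
    induction hu using Submodule.span_induction with
    | mem u hu =>
        obtain ⟨t, ht, rfl⟩ := hu
        have hh : t < ℓ := ht
        exact hinner ⟨t, hh⟩
    | zero => simp
    | add u v _ _ h1 h2 => rw [inner_add_left, h1, h2, add_zero]
    | smul c u _ h => rw [inner_smul_left, h, mul_zero]
  have hmem : dualFam C ℓ (ℓ - 1) - (‖g‖ ^ 2)⁻¹ • g ∈ S := Submodule.sub_mem _ hDmem hwmem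
  have := (Submodule.mem_orthogonal _ _).1 hdiff _ hmem
  rw [inner_self_eq_zero, sub_eq_zero] at this
  exact this

lemma norm_revDual_zero (hℓ : 1 ≤ ℓ) (hdet : (gram C ℓ).det ≠ 0)
    (hg : gsoVec C (ℓ - 1) ≠ 0) :
    ‖revDual C ℓ 0‖ = ‖gsoVec C (ℓ - 1)‖⁻¹ := by
  unfold revDual
  rw [Nat.sub_zero, dualFam_last C ℓ hℓ hdet hg]
  rw [norm_smul]
  rw [Real.norm_eq_abs, abs_inv, abs_pow, abs_norm]
  rw [pow_two, mul_inv, mul_assoc, inv_mul_cancel₀ (norm_ne_zero_iff.2 hg), mul_one]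

end Dual

open Submodule in
lemma gsoVec_ne_zero {ℓ : ℕ} (B : ℕ → Euc m)
    (hB : LinearIndependent ℝ (fun i : Fin ℓ => B i)) {i : ℕ} (hi : i < ℓ) :
    gsoVec B i ≠ 0 := by
  intro h
  have hmem : B i ∈ span ℝ (B '' Set.Iio i) := by
    have := sub_gsoVec_mem B i
    rwa [h, sub_zero] at this
  have himg : B '' Set.Iio i = (fun j : Fin ℓ => B j) '' {j : Fin ℓ | (j : ℕ) < i} := by
    ext y
    constructor
    · rintro ⟨j, hj, rfl⟩
      exact ⟨⟨j, lt_trans hj hi⟩, hj, rfl⟩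
    · rintro ⟨j, hj, rfl⟩
      exact ⟨j, hj, rfl⟩
  rw [himg] at hmem
  exact hB.notMem_span_image (s := {j : Fin ℓ | (j : ℕ) < i}) (x := ⟨i, hi⟩) (by simp) hmem

/-- if `B = (b_1, …, b_{d+1})` is a `δ`-twin-reduced basis with `d ≥ 2`
and `δ ≥ 1`, then `δ^{-d/(d-1)} ‖b_1‖ ≤ vol(L(B))^{1/(d+1)} ≤ δ^{d/(d-1)} ‖b*_{d+1}‖`. -/
theorem twin_reduced_volume {m d : ℕ} (hd : 2 ≤ d) {δ : ℝ} (hδ : 1 ≤ δ)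
    (B : ℕ → Euc m) (hB : LinearIndependent ℝ (fun i : Fin (d + 1) => B i))
    (hTwin : TwinReduced δ B d) :
    δ ^ (-(d : ℝ) / ((d : ℝ) - 1)) * ‖B 0‖ ≤ volB B (d + 1) ^ ((1 : ℝ) / (d + 1)) ∧
      volB B (d + 1) ^ ((1 : ℝ) / (d + 1)) ≤ δ ^ ((d : ℝ) / ((d : ℝ) - 1)) * ‖gsoVec B d‖ := by
  obtain ⟨h1, h2⟩ := hTwin
  have hδ0 : (0:ℝ) < δ := lt_of_lt_of_le one_pos hδ
  have hdd1 : 1 ≤ d * d := by nlinarith [hd]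
  -- cast facts
  have hdR : (0:ℝ) < (d:ℝ) := Nat.cast_pos.2 (by omega)
  have hd1R : (1:ℝ) < (d:ℝ) := by
    have h2d : (1:ℕ) < d := by omega
    exact Nat.one_lt_cast.2 h2d
  have hne1 : (d:ℝ) - 1 ≠ 0 := by nlinarith
  have hne3 : (d:ℝ) + 1 ≠ 0 := by nlinarith
  have hn0 : (0:ℝ) < (d:ℝ)*(d:ℝ) - 1 := by nlinarith
  have hn : ((d*d - 1 : ℕ) : ℝ) = (d:ℝ)*(d:ℝ) - 1 := by
    rw [Nat.cast_sub hdd1]; push_cast; ring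
  have hm : ((d - 1 : ℕ) : ℝ) = (d:ℝ) - 1 := by
    rw [Nat.cast_sub (by omega)]; push_cast; ring
  have hp : ((d*d + d : ℕ) : ℝ) = (d:ℝ)*(d:ℝ) + (d:ℝ) := by push_cast; ring
  have key : ∀ a b : ℝ, 0 < a → 0 < b → a ^ (d*d-1) ≤ δ ^ (d*d+d) * b ^ (d-1) →
      a ≤ δ ^ ((d:ℝ)/((d:ℝ)-1)) * b ^ ((1:ℝ)/((d:ℝ)+1)) := by
    intro a b ha hb h
    have e1 : a = (a ^ (d*d-1) : ℝ) ^ ((1:ℝ)/((d:ℝ)*(d:ℝ)-1)) := by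
      rw [← Real.rpow_natCast a (d*d-1), ← Real.rpow_mul ha.le, hn,
        mul_one_div, div_self hn0.ne', Real.rpow_one]
    rw [e1]
    have mono := Real.rpow_le_rpow (by positivity) h
      (by positivity : (0:ℝ) ≤ (1:ℝ)/((d:ℝ)*(d:ℝ)-1))
    refine mono.trans_eq ?_
    rw [Real.mul_rpow (by positivity) (by positivity)]
    rw [← Real.rpow_natCast δ (d*d+d), ← Real.rpow_natCast b (d-1),
      ← Real.rpow_mul hδ0.le, ← Real.rpow_mul hb.le]
    congr 1
    · congr 1
      rw [hp]
      rw [show (d:ℝ)*(d:ℝ)-1 = ((d:ℝ)-1)*((d:ℝ)+1) by ring]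
      field_simp
    · congr 1
      rw [hm]
      rw [show (d:ℝ)*(d:ℝ)-1 = ((d:ℝ)-1)*((d:ℝ)+1) by ring]
      field_simp
  have key2 : ∀ a b : ℝ, 0 < a → 0 < b → a ^ (d-1) ≤ δ ^ (d*d+d) * b ^ (d*d-1) →
      a ^ ((1:ℝ)/((d:ℝ)+1)) ≤ δ ^ ((d:ℝ)/((d:ℝ)-1)) * b := by
    intro a b ha hb h
    have e1 : a ^ ((1:ℝ)/((d:ℝ)+1)) = (a ^ (d-1) : ℝ) ^ ((1:ℝ)/((d:ℝ)*(d:ℝ)-1)) := by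
      rw [← Real.rpow_natCast a (d-1), ← Real.rpow_mul ha.le, hm]
      congr 1
      rw [show (d:ℝ)*(d:ℝ)-1 = ((d:ℝ)-1)*((d:ℝ)+1) by ring]
      field_simp
    rw [e1]
    have mono := Real.rpow_le_rpow (by positivity) h
      (by positivity : (0:ℝ) ≤ (1:ℝ)/((d:ℝ)*(d:ℝ)-1))
    refine mono.trans_eq ?_
    rw [Real.mul_rpow (by positivity) (by positivity)]
    rw [← Real.rpow_natCast δ (d*d+d), ← Real.rpow_natCast b (d*d-1),
      ← Real.rpow_mul hδ0.le, ← Real.rpow_mul hb.le]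
    congr 1
    · congr 1
      rw [hp]
      rw [show (d:ℝ)*(d:ℝ)-1 = ((d:ℝ)-1)*((d:ℝ)+1) by ring]
      field_simp
    · rw [hn, mul_one_div, div_self hn0.ne', Real.rpow_one]
  have hgne : ∀ i : ℕ, i < d + 1 → gsoVec B i ≠ 0 := fun i hi => gsoVec_ne_zero B hB hi
  have hg0 : gsoVec B 0 = B 0 := congrFun (block_zero B) 0
  set x := ‖B 0‖ with hxdef
  set y := ‖gsoVec B d‖ with hydef
  have hxpos : 0 < x := by
    rw [hxdef, ← hg0]; exact norm_pos_iff.2 (hgne 0 (by omega))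
  have hypos : 0 < y := norm_pos_iff.2 (hgne d (by omega))
  set V := volB B (d+1) with hVdef
  set V1 := volB B d with hV1def
  set C := block B 1 with hCdef
  set V2 := volB C d with hV2def
  have hprodpos : ∀ ℓ : ℕ, ℓ ≤ d + 1 → 0 < ∏ i : Fin ℓ, ‖gsoVec B i‖ := by
    intro ℓ hℓ
    apply Finset.prod_pos
    intro i _
    have := i.isLt
    exact norm_pos_iff.2 (hgne i (by omega))
  have hVpos : 0 < V := by rw [hVdef, volB_eq_prod]; exact hprodpos (d+1) le_rfl
  have hV1pos : 0 < V1 := by rw [hV1def, volB_eq_prod]; exact hprodpos d (by omega)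
  have hgC : ∀ i : ℕ, gsoVec C i = gsoVec B (1 + i) := fun i => gsoVec_block B 1 i
  have hV2prod : V2 = ∏ i : Fin d, ‖gsoVec B (1 + i)‖ := by
    rw [hV2def, volB_eq_prod]
    exact Finset.prod_congr rfl fun i _ => by rw [hgC i]
  have hV2pos : 0 < V2 := by
    rw [hV2prod]
    apply Finset.prod_pos
    intro i _
    have := i.isLt
    exact norm_pos_iff.2 (hgne (1 + i) (by omega))
  have hVsplit1 : V = V1 * y := by
    rw [hVdef, hV1def, volB_eq_prod, volB_eq_prod, hydef, Fin.prod_univ_castSucc]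
    simp [Fin.coe_castSucc, Fin.val_last]
  have hVsplit2 : V = x * V2 := by
    rw [hVdef, volB_eq_prod, hV2prod, Fin.prod_univ_succ]
    congr 1
    · show ‖gsoVec B ((0 : Fin (d+1)) : ℕ)‖ = x
      rw [show ((0 : Fin (d+1)) : ℕ) = 0 from rfl, hg0]
    · apply Finset.prod_congr rfl
      intro i _
      show ‖gsoVec B ((i.succ : Fin (d+1)) : ℕ)‖ = ‖gsoVec B (1 + i)‖
      rw [Fin.val_succ, Nat.add_comm]
  have h1' : x ≤ δ * V1 ^ ((1:ℝ)/(d:ℕ)) := by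
    have hh := h1
    unfold HSVPReduced at hh
    rwa [block_zero B] at hh
  have hdetC : (gram C d).det ≠ 0 := by
    rw [gram_det]
    apply ne_of_gt
    apply Finset.prod_pos
    intro i _
    have hi := i.isLt
    have hne : gsoVec C i ≠ 0 := by rw [hgC i]; exact hgne _ (by omega)
    exact pow_pos (norm_pos_iff.2 hne) 2
  have hgCd : gsoVec C (d-1) = gsoVec B d := by
    rw [hgC (d-1), show 1 + (d - 1) = d from by omega]
  have hgCdne : gsoVec C (d-1) ≠ 0 := by rw [hgCd]; exact hgne d (by omega)
  have h2' : y⁻¹ ≤ δ * (V2⁻¹) ^ ((1:ℝ)/(d:ℕ)) := by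
    have hh := h2
    unfold DHSVPReduced HSVPReduced at hh
    rwa [norm_revDual_zero C d (by omega) hdetC hgCdne, volB_revDual C d hdetC, hgCd] at hh
  have hrpowd : ∀ t : ℝ, 0 ≤ t → (t ^ ((1:ℝ)/(d:ℕ))) ^ d = t := by
    intro t ht
    rw [← Real.rpow_natCast (t ^ ((1:ℝ)/(d:ℕ))) d, ← Real.rpow_mul ht,
      one_div_mul_cancel (ne_of_gt hdR), Real.rpow_one]
  have hA : x ^ d * y ≤ δ ^ d * V := by
    have hq : x ^ d ≤ (δ * V1 ^ ((1:ℝ)/(d:ℕ))) ^ d := pow_le_pow_left₀ hxpos.le h1' d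
    rw [mul_pow, hrpowd V1 hV1pos.le] at hq
    calc x ^ d * y ≤ δ ^ d * V1 * y := mul_le_mul_of_nonneg_right hq hypos.le
      _ = δ ^ d * V := by rw [mul_assoc, ← hVsplit1]
  have hB2 : V ≤ δ ^ d * (x * y ^ d) := by
    have ht : 0 < V2 ^ ((1:ℝ)/(d:ℕ)) := Real.rpow_pos_of_pos hV2pos _
    have h2'' : y⁻¹ ≤ δ * (V2 ^ ((1:ℝ)/(d:ℕ)))⁻¹ := by
      rwa [← Real.inv_rpow hV2pos.le]
    have hty : V2 ^ ((1:ℝ)/(d:ℕ)) ≤ δ * y := by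
      have step : V2 ^ ((1:ℝ)/(d:ℕ)) * y⁻¹ ≤ V2 ^ ((1:ℝ)/(d:ℕ)) * (δ * (V2 ^ ((1:ℝ)/(d:ℕ)))⁻¹) :=
        mul_le_mul_of_nonneg_left h2'' ht.le
      rw [mul_comm δ _, ← mul_assoc, mul_inv_cancel₀ ht.ne', one_mul] at step
      calc V2 ^ ((1:ℝ)/(d:ℕ)) = V2 ^ ((1:ℝ)/(d:ℕ)) * y⁻¹ * y := by
            field_simp
        _ ≤ δ * y := mul_le_mul_of_nonneg_right step hypos.le
    have hV2y : V2 ≤ δ ^ d * y ^ d := by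
      have hq := pow_le_pow_left₀ ht.le hty d
      rwa [hrpowd V2 hV2pos.le, mul_pow] at hq
    calc V = x * V2 := hVsplit2
      _ ≤ x * (δ ^ d * y ^ d) := mul_le_mul_of_nonneg_left hV2y hxpos.le
      _ = δ ^ d * (x * y ^ d) := by ring
  have hGA : x ^ (d*d-1) ≤ δ ^ (d*d+d) * V ^ (d-1) := by
    have h3 : x ^ (d*d) * y ^ d ≤ δ ^ (d*d) * V ^ d := by
      have hq := pow_le_pow_left₀ (by positivity) hA d
      rwa [mul_pow, mul_pow, ← pow_mul, ← pow_mul] at hq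
    have h4 : x ^ (d*d-1) * V ≤ δ ^ d * (x ^ (d*d) * y ^ d) := by
      calc x ^ (d*d-1) * V ≤ x ^ (d*d-1) * (δ ^ d * (x * y ^ d)) :=
            mul_le_mul_of_nonneg_left hB2 (by positivity)
        _ = δ ^ d * (x ^ (d*d-1) * x * y ^ d) := by ring
        _ = δ ^ d * (x ^ (d*d) * y ^ d) := by
            rw [← pow_succ]
            congr 3
            omega
    have h5 : x ^ (d*d-1) * V ≤ δ ^ (d*d+d) * V ^ (d-1) * V := by
      calc x ^ (d*d-1) * V ≤ δ ^ d * (δ ^ (d*d) * V ^ d) :=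
            h4.trans (mul_le_mul_of_nonneg_left h3 (by positivity))
        _ = δ ^ (d*d+d) * V ^ (d-1) * V := by
            rw [pow_add, show V ^ d = V ^ (d-1) * V from by rw [← pow_succ]; congr 1; omega]
            ring
    exact le_of_mul_le_mul_right h5 hVpos
  have hGB : V ^ (d-1) ≤ δ ^ (d*d+d) * y ^ (d*d-1) := by
    have h3 : V ^ d ≤ δ ^ (d*d) * (x ^ d * y ^ (d*d)) := by
      have hq := pow_le_pow_left₀ hVpos.le hB2 d
      rwa [mul_pow, mul_pow, ← pow_mul, ← pow_mul] at hq
    have h4 : V ^ d * y ≤ δ ^ (d*d) * (δ ^ d * V) * y ^ (d*d) := by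
      calc V ^ d * y ≤ δ ^ (d*d) * (x ^ d * y ^ (d*d)) * y :=
            mul_le_mul_of_nonneg_right h3 hypos.le
        _ = δ ^ (d*d) * (x ^ d * y) * y ^ (d*d) := by ring
        _ ≤ δ ^ (d*d) * (δ ^ d * V) * y ^ (d*d) := by
            apply mul_le_mul_of_nonneg_right _ (by positivity)
            exact mul_le_mul_of_nonneg_left hA (by positivity)
    have h5 : V ^ (d-1) * (V * y) ≤ δ ^ (d*d+d) * y ^ (d*d-1) * (V * y) := by
      calc V ^ (d-1) * (V * y) = V ^ d * y := by
            rw [show V ^ d = V ^ (d-1) * V from by rw [← pow_succ]; congr 1; omega]; ring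
        _ ≤ δ ^ (d*d) * (δ ^ d * V) * y ^ (d*d) := h4
        _ = δ ^ (d*d+d) * y ^ (d*d-1) * (V * y) := by
            rw [pow_add, show y ^ (d*d) = y ^ (d*d-1) * y from by rw [← pow_succ]; congr 1; omega]
            ring
    exact le_of_mul_le_mul_right h5 (by positivity)
  constructor
  · have hk := key x V hxpos hVpos hGA
    have hgoal : δ ^ (-(d:ℝ)/((d:ℝ)-1)) * x ≤ V ^ ((1:ℝ)/((d:ℝ)+1)) := by
      rw [show (-(d:ℝ)/((d:ℝ)-1)) = -((d:ℝ)/((d:ℝ)-1)) from by ring, Real.rpow_neg hδ0.le]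
      rw [inv_mul_le_iff₀ (Real.rpow_pos_of_pos hδ0 _)]
      exact hk
    exact hgoal
  · have hk := key2 V y hVpos hypos hGB
    exact hk

end
end

section
/- Let B = (b_1, …, b_n) ∈ ℝ^{m×n} be a basis, let α, β ≥ 1, and let 1 ≤ d < n. If B_{[d+1,n]} is β-SVP-reduced, ‖b_1‖ ≤ α·‖b*_{d+1}‖, and λ_1(L(B)) < λ_1(L(B_{[1,d]})), then B is αβ-SVP-reduced, i.e., ‖b_1‖ ≤ αβ·λ_1(L(B)). -/
noncomputable section

variable {m : ℕ}

lemma lambda1_le {L : Submodule ℤ (Euc m)} {x : Euc m} (hx : x ∈ L) (hx0 : x ≠ 0) :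
    lambda1 L ≤ ‖x‖ :=
  csInf_le ⟨0, by rintro r ⟨y, _, _, rfl⟩; exact norm_nonneg y⟩ ⟨x, hx, hx0, rfl⟩

lemma image_Iio_eq_range (B : ℕ → Euc m) (k : ℕ) :
    B '' Set.Iio k = Set.range (fun i : Fin k => B (i : ℕ)) := by
  ext y
  constructor
  · rintro ⟨i, hi, rfl⟩; exact ⟨⟨i, hi⟩, rfl⟩
  · rintro ⟨i, rfl⟩; exact ⟨i, i.2, rfl⟩


/-- gluing lemma, SVP part. -/
theorem gluing_svp {m n d : ℕ} (hd1 : 1 ≤ d) (hdn : d < n) {α β : ℝ}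
    (hα : 1 ≤ α) (hβ : 1 ≤ β)
    (B : ℕ → Euc m) (hB : LinearIndependent ℝ (fun i : Fin n => B i))
    (hblock : SVPReduced β (block B d) (n - d))
    (hfirst : ‖B 0‖ ≤ α * ‖gsoVec B d‖)
    (hgap : lambda1 (latticeSpan B n) < lambda1 (latticeSpan (block B 0) d)) :
    ‖B 0‖ ≤ α * β * lambda1 (latticeSpan B n) := by
  -- block B 0 = B
  have hb0 : block B 0 = fun t => B t := by
    funext t
    show (Submodule.orthogonalProjectionOnto ((Submodule.span ℝ (B '' Set.Iio 0))ᗮ) (B (0 + t)) : Euc m) = B t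
    have hIio : (Set.Iio 0 : Set ℕ) = ∅ := by ext i; simp
    have hmem : B (0 + t) ∈ (Submodule.span ℝ (B '' Set.Iio 0))ᗮ := by
      rw [hIio]
      simp [Submodule.mem_top]
    have := Submodule.starProjection_eq_self_iff.mpr hmem
    rw [Nat.zero_add] at this ⊢
    exact this
  rw [hb0] at hgap
  set L := latticeSpan B n with hLdef
  set K := Submodule.span ℝ (B '' Set.Iio d) with hKdef
  set P : Euc m →ₗ[ℝ] Euc m :=
    Kᗮ.subtype ∘ₗ (Submodule.orthogonalProjectionOnto Kᗮ).toLinearMap with hPdef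
  have hPapp : ∀ x, projGS B d x = P x := fun x => rfl
  have hPnorm : ∀ x, ‖P x‖ ≤ ‖x‖ := by
    intro x
    calc ‖P x‖ = ‖Submodule.orthogonalProjectionOnto Kᗮ x‖ := rfl
      _ ≤ ‖Submodule.orthogonalProjectionOnto Kᗮ‖ * ‖x‖ := (Submodule.orthogonalProjectionOnto Kᗮ).le_opNorm x
      _ ≤ 1 * ‖x‖ := by
          have := Submodule.orthogonalProjectionOnto_norm_le Kᗮ
          have h0 : (0:ℝ) ≤ ‖x‖ := norm_nonneg x
          nlinarith
      _ = ‖x‖ := one_mul _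
  have hPzero : ∀ i : ℕ, i < d → P (B i) = 0 := by
    intro i hi
    have hmem : B i ∈ Kᗮᗮ := by
      rw [Submodule.orthogonal_orthogonal]
      exact Submodule.subset_span ⟨i, hi, rfl⟩
    have := Submodule.orthogonalProjectionOnto_apply_of_mem_orthogonal (K := Kᗮ) hmem
    simp [hPdef, this]
  have hPker : ∀ x : Euc m, P x = 0 → x ∈ K := by
    intro x hx
    have := Submodule.sub_starProjection_mem_orthogonal (K := Kᗮ) x
    rw [Submodule.orthogonal_orthogonal] at this
    have hx' : x - P x ∈ K := this
    rwa [hx, sub_zero] at hx'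
  set Lb := latticeSpan (block B d) (n - d) with hLbdef
  have hgso : ‖gsoVec B d‖ ≤ β * lambda1 Lb := hblock
  -- nonemptiness of the norm set of L
  have hB0ne : B 0 ≠ 0 := by
    have := hB.ne_zero ⟨0, by omega⟩
    simpa using this
  have hB0L : B 0 ∈ L := Submodule.subset_span ⟨0, by simpa using (by omega : 0 < n), rfl⟩
  have hSne : {r : ℝ | ∃ x ∈ L, x ≠ 0 ∧ ‖x‖ = r}.Nonempty := ⟨‖B 0‖, B 0, hB0L, hB0ne, rfl⟩
  -- key inequality
  have hLb_le : lambda1 Lb ≤ lambda1 L := by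
    apply le_of_forall_pos_le_add
    intro ε hε
    have hlt : sInf {r : ℝ | ∃ x ∈ L, x ≠ 0 ∧ ‖x‖ = r}
        < min (lambda1 L + ε) (lambda1 (latticeSpan (fun t => B t) d)) :=
      lt_min (by have : lambda1 L = sInf {r : ℝ | ∃ x ∈ L, x ≠ 0 ∧ ‖x‖ = r} := rfl; linarith)
        hgap
    obtain ⟨r, ⟨x, hxL, hx0, rfl⟩, hr⟩ := exists_lt_of_csInf_lt hSne hlt
    have hrd : ‖x‖ < lambda1 (latticeSpan (fun t => B t) d) :=
      lt_of_lt_of_le hr (min_le_right _ _)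
    have hrε : ‖x‖ < lambda1 L + ε := lt_of_lt_of_le hr (min_le_left _ _)
    -- decompose x
    have hxL' : x ∈ Submodule.span ℤ (Set.range fun i : Fin n => B (i : ℕ)) := by
      rwa [hLdef, latticeSpan, image_Iio_eq_range] at hxL
    obtain ⟨z, hz⟩ := (Submodule.mem_span_range_iff_exists_fun ℤ).mp hxL'
    -- x is not in the rank-d sublattice
    have hxnotd : x ∉ latticeSpan (fun t => B t) d := by
      intro hmem
      exact absurd (lambda1_le hmem hx0) (not_le.mpr hrd)
    -- P x ≠ 0
    have hzsum : ∑ i : Fin n, ((z i : ℝ)) • B (i : ℕ) = x := by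
      rw [← hz]
      exact Finset.sum_congr rfl fun i _ => Int.cast_smul_eq_zsmul ℝ (z i) (B (i : ℕ))
    have hPx_ne : P x ≠ 0 := by
      intro h0
      have hxK : x ∈ K := hPker x h0
      have hxK' : x ∈ Submodule.span ℝ (Set.range fun i : Fin d => B (i : ℕ)) := by
        rwa [hKdef, image_Iio_eq_range] at hxK
      obtain ⟨c, hc⟩ := (Submodule.mem_span_range_iff_exists_fun ℝ).mp hxK'
      set c' : ℕ → ℝ := fun i => if h : i < d then c ⟨i, h⟩ else 0 with hc'def
      have hc1 : ∑ i ∈ Finset.range d, c' i • B i = x := by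
        rw [← hc, ← Fin.sum_univ_eq_sum_range (fun i => c' i • B i) d]
        refine Finset.sum_congr rfl fun j _ => ?_
        simp [hc'def, j.2]
      have hc2 : ∑ i : Fin n, c' (i : ℕ) • B (i : ℕ) = x := by
        rw [Fin.sum_univ_eq_sum_range (fun i => c' i • B i) n,
          ← Finset.sum_subset (Finset.range_subset_range.mpr (le_of_lt hdn))]
        · exact hc1
        · intro i _ hi
          rw [Finset.mem_range] at hi
          simp [hc'def, hi]
      have hzero : ∀ i : Fin n, ((z i : ℝ) - c' (i : ℕ)) = 0 := by
        have hsum0 : ∑ i : Fin n, ((z i : ℝ) - c' (i : ℕ)) • B (i : ℕ) = 0 := by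
          have : ∑ i : Fin n, ((z i : ℝ) - c' (i : ℕ)) • B (i : ℕ)
              = (∑ i : Fin n, (z i : ℝ) • B (i : ℕ)) - ∑ i : Fin n, c' (i : ℕ) • B (i : ℕ) := by
            rw [← Finset.sum_sub_distrib]
            exact Finset.sum_congr rfl fun i _ => sub_smul _ _ _
          rw [this, hzsum, hc2, sub_self]
        exact fun i => Fintype.linearIndependent_iff.mp hB _ hsum0 i
      have hzhigh : ∀ i : Fin n, d ≤ (i : ℕ) → z i = 0 := by
        intro i hi
        have h1 := hzero i
        have h2 : c' (i : ℕ) = 0 := by simp [hc'def, not_lt.mpr hi]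
        rw [h2, sub_zero, Int.cast_eq_zero] at h1
        exact h1
      apply hxnotd
      rw [← hz]
      apply Submodule.sum_mem
      intro i _
      by_cases hi : (i : ℕ) < d
      · exact Submodule.smul_mem _ _ (Submodule.subset_span ⟨(i : ℕ), hi, rfl⟩)
      · rw [hzhigh i (le_of_not_gt hi), zero_smul]
        exact Submodule.zero_mem _
    -- P x ∈ Lb
    have hPxLb : P x ∈ Lb := by
      have hPx : P x = ∑ i : Fin n, (z i : ℝ) • P (B (i : ℕ)) := by
        rw [← hzsum, map_sum]
        exact Finset.sum_congr rfl fun i _ => map_smul P _ _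
      rw [hPx]
      apply Submodule.sum_mem
      intro i _
      by_cases hi : (i : ℕ) < d
      · rw [hPzero i hi, smul_zero]; exact Submodule.zero_mem _
      · have hid : d ≤ (i : ℕ) := le_of_not_gt hi
        have hblockmem : P (B (i : ℕ)) ∈ Lb := by
          have heq : block B d ((i : ℕ) - d) = P (B (i : ℕ)) := by
            show projGS B d (B (d + ((i : ℕ) - d))) = P (B (i : ℕ))
            rw [Nat.add_sub_cancel' hid]
            exact hPapp _
          rw [← heq]
          exact Submodule.subset_span ⟨(i : ℕ) - d, by simp only [Set.mem_Iio]; omega, rfl⟩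
        rw [Int.cast_smul_eq_zsmul ℝ (z i) (P (B (i : ℕ)))]
        exact Submodule.smul_mem _ _ hblockmem
    calc lambda1 Lb ≤ ‖P x‖ := lambda1_le hPxLb hPx_ne
      _ ≤ ‖x‖ := hPnorm x
      _ ≤ lambda1 L + ε := le_of_lt hrε
  -- conclude
  have hα0 : (0:ℝ) ≤ α := by linarith
  have hβ0 : (0:ℝ) ≤ β := by linarith
  calc ‖B 0‖ ≤ α * ‖gsoVec B d‖ := hfirst
    _ ≤ α * (β * lambda1 Lb) := by nlinarith [norm_nonneg (gsoVec B d)]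
    _ ≤ α * (β * lambda1 L) := mul_le_mul_of_nonneg_left (mul_le_mul_of_nonneg_left hLb_le hβ0) hα0
    _ = α * β * lambda1 L := (mul_assoc α β _).symm

end
end
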